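/- Let (Ω, 𝔉, μ) be a probability space, let m₁ ⊆ m₂ be sub-σ-algebras of 𝔉, and let Y : Ω → ℝ be square-integrable such that the σ-algebra generated by Y and m₂ are conditionally independent given m₁ (with respect to μ). Then E[(Y − E[Y | m₂])²] = E[(Y − E[Y | m₁])²]. -/

import Mathlib

open MeasureTheory Set Filter Topology

/-- Auxiliary: conditional independence of `σ(Y)` and `m₂` given `m₁ ≤ m₂` implies
`E[Y|m₂] = E[Y|m₁]` a.e. -/
theorem condexp_eq_condexp_of_CI {Ω : Type*} (m₁ m₂ : MeasurableSpace Ω) [F : MeasurableSpace Ω]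
    (μ : Measure Ω) [IsProbabilityMeasure μ]
    (hm₁₂ : m₁ ≤ m₂) (hm₂ : m₂ ≤ F)
    (Y : Ω → ℝ) (hYint : Integrable Y μ)
    (hCI : ∀ A B : Set Ω,
      MeasurableSet[MeasurableSpace.comap Y (inferInstance : MeasurableSpace ℝ)] A →
      MeasurableSet[m₂] B →
      (μ[fun ω => A.indicator (fun _ => (1 : ℝ)) ω * B.indicator (fun _ => (1 : ℝ)) ω | m₁])
        =ᵐ[μ] fun ω =>
          (μ[A.indicator (fun _ => (1 : ℝ)) | m₁]) ω * (μ[B.indicator (fun _ => (1 : ℝ)) | m₁]) ω) :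
    (∫ ω, (Y ω - (μ[Y|m₂]) ω) ^ 2 ∂μ) = ∫ ω, (Y ω - (μ[Y|m₁]) ω) ^ 2 ∂μ := by
  have hm₁ : m₁ ≤ F := hm₁₂.trans hm₂
  suffices hc : μ[Y|m₂] =ᵐ[μ] μ[Y|m₁] by
    refine integral_congr_ae ?_
    filter_upwards [hc] with ω hω
    rw [hω]
  obtain ⟨Y', hY'sm, hYY'⟩ := hYint.1
  have hY'meas : Measurable Y' := hY'sm.measurable
  have hY'int : Integrable Y' μ := hYint.congr hYY'
  refine (ae_eq_condExp_of_forall_setIntegral_eq hm₂ hYint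
    (fun s _ _ => integrable_condExp.integrableOn)
    (fun B hB _ => ?_)
    (StronglyMeasurable.aestronglyMeasurable (stronglyMeasurable_condExp.mono hm₁₂))).symm
  have hBF : MeasurableSet B := hm₂ B hB
  set iB : Ω → ℝ := B.indicator (fun _ => (1 : ℝ)) with hiB_def
  have hiB_int : Integrable iB μ := (integrable_const (1 : ℝ)).indicator hBF
  set P : (Ω → ℝ) → Prop := fun f => ∫ x in B, f x ∂μ = ∫ x in B, (μ[f|m₁]) x ∂μ with hP_def
  -- the predicate respects a.e. equality
  have hP_ae : ∀ f g : Ω → ℝ, f =ᵐ[μ] g → P f → P g := by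
    intro f g hfg hPf
    show ∫ x in B, g x ∂μ = ∫ x in B, (μ[g|m₁]) x ∂μ
    have h2 : μ[f|m₁] =ᵐ[μ] μ[g|m₁] := condExp_congr_ae hfg
    calc ∫ x in B, g x ∂μ = ∫ x in B, f x ∂μ :=
          setIntegral_congr_ae hBF (hfg.symm.mono fun x hx _ => hx)
      _ = ∫ x in B, (μ[f|m₁]) x ∂μ := hPf
      _ = ∫ x in B, (μ[g|m₁]) x ∂μ :=
          setIntegral_congr_ae hBF (h2.mono fun x hx _ => hx)
  -- additivity
  have hP_add : ∀ f g : Ω → ℝ, Integrable f μ → Integrable g μ → P f → P g →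
      P (fun x => f x + g x) := by
    intro f g hfi hgi hPf hPg
    show ∫ x in B, (f x + g x) ∂μ = ∫ x in B, (μ[fun x => f x + g x|m₁]) x ∂μ
    have h2 : μ[fun x => f x + g x|m₁] =ᵐ[μ] fun x => (μ[f|m₁]) x + (μ[g|m₁]) x :=
      condExp_add hfi hgi m₁
    calc ∫ x in B, (f x + g x) ∂μ
        = ∫ x in B, f x ∂μ + ∫ x in B, g x ∂μ :=
          integral_add hfi.integrableOn hgi.integrableOn
      _ = ∫ x in B, (μ[f|m₁]) x ∂μ + ∫ x in B, (μ[g|m₁]) x ∂μ := by rw [hPf, hPg]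
      _ = ∫ x in B, ((μ[f|m₁]) x + (μ[g|m₁]) x) ∂μ :=
          (integral_add integrable_condExp.integrableOn integrable_condExp.integrableOn).symm
      _ = ∫ x in B, (μ[fun x => f x + g x|m₁]) x ∂μ :=
          (setIntegral_congr_ae hBF (h2.mono fun x hx _ => hx)).symm
  -- scalar multiples
  have hP_smul : ∀ (c : ℝ) (f : Ω → ℝ), P f → P (fun x => c * f x) := by
    intro c f hPf
    show ∫ x in B, c * f x ∂μ = ∫ x in B, (μ[fun x => c * f x|m₁]) x ∂μ
    have h2 : μ[fun x => c * f x|m₁] =ᵐ[μ] fun x => c * (μ[f|m₁]) x := by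
      have h3 := condExp_smul (μ := μ) (m := m₁) c f
      filter_upwards [h3] with x hx
      exact hx
    calc ∫ x in B, c * f x ∂μ = c * ∫ x in B, f x ∂μ := integral_const_mul c _
      _ = c * ∫ x in B, (μ[f|m₁]) x ∂μ := by rw [hPf]
      _ = ∫ x in B, c * (μ[f|m₁]) x ∂μ := (integral_const_mul c _).symm
      _ = ∫ x in B, (μ[fun x => c * f x|m₁]) x ∂μ :=
          (setIntegral_congr_ae hBF (h2.mono fun x hx _ => hx)).symm
  -- pull-out identity
  have hpull : ∀ h : Ω → ℝ,
      ∫ x, (μ[h|m₁]) x * (μ[iB|m₁]) x ∂μ = ∫ x in B, (μ[h|m₁]) x ∂μ := by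
    intro h
    have hmul_eq : (fun x => B.indicator (μ[h|m₁]) x) = (μ[h|m₁]) * iB := by
      funext x; by_cases hx : x ∈ B <;> simp [iB, Set.indicator, hx]
    have hmul_int : Integrable ((μ[h|m₁]) * iB) μ := by
      rw [← hmul_eq]; exact integrable_condExp.indicator hBF
    have hpull' := condExp_mul_of_stronglyMeasurable_left (μ := μ) (m := m₁)
      (stronglyMeasurable_condExp (f := h)) hmul_int hiB_int
    calc ∫ x, (μ[h|m₁]) x * (μ[iB|m₁]) x ∂μ
        = ∫ x, (μ[(μ[h|m₁]) * iB|m₁]) x ∂μ := (integral_congr_ae hpull').symm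
      _ = ∫ x, ((μ[h|m₁]) * iB) x ∂μ := integral_condExp hm₁
      _ = ∫ x in B, (μ[h|m₁]) x ∂μ := by rw [← integral_indicator hBF, hmul_eq]
  -- base case: indicators of sets in σ(Y')
  have hP_ind : ∀ S : Set ℝ, MeasurableSet S →
      P ((Y' ⁻¹' S).indicator fun _ => (1 : ℝ)) := by
    intro S hS
    set A : Set Ω := Y ⁻¹' S with hA_def
    set A' : Set Ω := Y' ⁻¹' S with hA'_def
    have hA'meas : MeasurableSet A' := hY'meas hS
    have hIA : A.indicator (fun _ => (1 : ℝ)) =ᵐ[μ] A'.indicator (fun _ => (1 : ℝ)) := by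
      filter_upwards [hYY'] with ω hω
      by_cases h : Y' ω ∈ S <;>
        simp [Set.indicator_apply, Set.mem_preimage, hω, h, hA_def, hA'_def]
    have hprodae : (fun ω => A.indicator (fun _ => (1 : ℝ)) ω * iB ω)
        =ᵐ[μ] fun ω => A'.indicator (fun _ => (1 : ℝ)) ω * iB ω := by
      filter_upwards [hIA] with ω hω; rw [hω]
    have hAc : MeasurableSet[MeasurableSpace.comap Y (inferInstance : MeasurableSpace ℝ)] A :=
      ⟨S, hS, rfl⟩
    have hcond_eq : μ[A.indicator (fun _ => (1 : ℝ))|m₁]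
        =ᵐ[μ] μ[A'.indicator (fun _ => (1 : ℝ))|m₁] := condExp_congr_ae hIA
    show ∫ x in B, A'.indicator (fun _ => (1 : ℝ)) x ∂μ
        = ∫ x in B, (μ[A'.indicator fun _ => (1 : ℝ)|m₁]) x ∂μ
    calc ∫ x in B, A'.indicator (fun _ => (1 : ℝ)) x ∂μ
        = ∫ x, A'.indicator (fun _ => (1 : ℝ)) x * iB x ∂μ := by
          rw [← integral_indicator hBF]
          congr 1
          funext x
          by_cases hx : x ∈ B <;> simp [Set.indicator, iB, hx]
      _ = ∫ x, A.indicator (fun _ => (1 : ℝ)) x * iB x ∂μ := (integral_congr_ae hprodae).symm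
      _ = ∫ x, (μ[fun ω => A.indicator (fun _ => (1 : ℝ)) ω * iB ω|m₁]) x ∂μ :=
          (integral_condExp hm₁).symm
      _ = ∫ x, (μ[A.indicator (fun _ => (1 : ℝ))|m₁]) x * (μ[iB|m₁]) x ∂μ :=
          integral_congr_ae (hCI A B hAc hB)
      _ = ∫ x, (μ[A'.indicator (fun _ => (1 : ℝ))|m₁]) x * (μ[iB|m₁]) x ∂μ :=
          integral_congr_ae (by filter_upwards [hcond_eq] with x hx; rw [hx])
      _ = ∫ x in B, (μ[A'.indicator (fun _ => (1 : ℝ))|m₁]) x ∂μ := hpull _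
  -- integrability of simple-function compositions
  have hcomp_int : ∀ e : SimpleFunc ℝ ℝ, Integrable (fun ω => e (Y' ω)) μ := by
    intro e
    obtain ⟨C, hC⟩ := (e.map fun t => ‖t‖).exists_forall_le
    refine (integrable_const C).mono' ((e.measurable.comp hY'meas).aestronglyMeasurable) ?_
    exact Eventually.of_forall fun ω => by simpa using hC (Y' ω)
  -- simple functions of Y'
  have hQ : ∀ e : SimpleFunc ℝ ℝ, P (fun ω => e (Y' ω)) := by
    intro e
    induction e using SimpleFunc.induction with
    | @const c S hS =>
      have heq : (fun ω => (SimpleFunc.piecewise S hS (SimpleFunc.const ℝ c)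
          (SimpleFunc.const ℝ 0)) (Y' ω))
          = fun ω => c * (Y' ⁻¹' S).indicator (fun _ => (1 : ℝ)) ω := by
        funext ω
        by_cases hω : Y' ω ∈ S <;>
          simp [SimpleFunc.piecewise_apply, Set.indicator, hω]
      rw [heq]
      exact hP_smul c _ (hP_ind S hS)
    | @add f g _ hPf hPg =>
      have heq : (fun ω => (f + g) (Y' ω)) = fun ω => f (Y' ω) + g (Y' ω) := by
        funext ω; simp
      rw [heq]
      exact hP_add _ _ (hcomp_int f) (hcomp_int g) hPf hPg
  -- approximation of Y' by simple functions of Y'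
  set e : ℕ → SimpleFunc ℝ ℝ := fun n =>
    SimpleFunc.approxOn id measurable_id Set.univ 0 (Set.mem_univ 0) n with he_def
  have hdiff : ∀ (n : ℕ) (ω : Ω), ‖e n (Y' ω) - Y' ω‖ ≤ ‖Y' ω‖ := by
    intro n ω
    have h := SimpleFunc.nnnorm_approxOn_le (f := (id : ℝ → ℝ)) measurable_id
      (Set.mem_univ (0 : ℝ)) (Y' ω) n
    simp only [id] at h
    have h' : ‖e n (Y' ω) - Y' ω‖₊ ≤ ‖Y' ω‖₊ := by simpa using h
    exact NNReal.coe_le_coe.mpr h'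
  have htendsto : ∀ ω : Ω, Tendsto (fun n => e n (Y' ω)) atTop (𝓝 (Y' ω)) := by
    intro ω
    have := SimpleFunc.tendsto_approxOn (f := (id : ℝ → ℝ)) measurable_id
      (Set.mem_univ (0 : ℝ)) (x := Y' ω) (by simp)
    simpa using this
  have hL1 : Tendsto (fun n => ∫ ω, ‖e n (Y' ω) - Y' ω‖ ∂μ) atTop (𝓝 0) := by
    have h0 : Tendsto (fun n => ∫ ω, ‖e n (Y' ω) - Y' ω‖ ∂μ) atTop
        (𝓝 (∫ _ω, (0 : ℝ) ∂μ)) := by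
      refine tendsto_integral_of_dominated_convergence (fun ω => ‖Y' ω‖)
        (fun n => ((((e n).measurable.comp hY'meas).sub hY'meas).norm).aestronglyMeasurable)
        hY'int.norm
        (fun n => Eventually.of_forall fun ω => by simpa using hdiff n ω)
        (Eventually.of_forall fun ω => ?_)
      have := (htendsto ω).sub (tendsto_const_nhds (x := Y' ω))
      simpa using this.norm
    simpa using h0
  -- pass to the limit
  have hPe : ∀ n, P (fun ω => e n (Y' ω)) := fun n => hQ (e n)
  have h1 : Tendsto (fun n => ∫ x in B, e n (Y' x) ∂μ) atTop (𝓝 (∫ x in B, Y' x ∂μ)) := by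
    rw [tendsto_iff_dist_tendsto_zero]
    refine squeeze_zero (fun n => dist_nonneg) (fun n => ?_) hL1
    have hint : Integrable (fun x => e n (Y' x)) μ := hcomp_int (e n)
    rw [Real.dist_eq, ← integral_sub hint.integrableOn hY'int.integrableOn]
    calc |∫ x in B, (e n (Y' x) - Y' x) ∂μ| ≤ ∫ x in B, ‖e n (Y' x) - Y' x‖ ∂μ := by
          rw [← Real.norm_eq_abs]
          exact norm_integral_le_integral_norm _
      _ ≤ ∫ x, ‖e n (Y' x) - Y' x‖ ∂μ :=
          setIntegral_le_integral (hint.sub hY'int).norm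
            (Eventually.of_forall fun x => norm_nonneg _)
  have h2 : Tendsto (fun n => ∫ x in B, e n (Y' x) ∂μ) atTop
      (𝓝 (∫ x in B, (μ[Y'|m₁]) x ∂μ)) := by
    have hrw : (fun n => ∫ x in B, e n (Y' x) ∂μ)
        = fun n => ∫ x in B, (μ[fun ω => e n (Y' ω)|m₁]) x ∂μ := funext fun n => hPe n
    rw [hrw, tendsto_iff_dist_tendsto_zero]
    refine squeeze_zero (fun n => dist_nonneg) (fun n => ?_) hL1
    have hint : Integrable (fun x => e n (Y' x)) μ := hcomp_int (e n)
    have hsub : (fun x => (μ[fun ω => e n (Y' ω)|m₁]) x - (μ[Y'|m₁]) x)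
        =ᵐ[μ] μ[fun x => e n (Y' x) - Y' x|m₁] := (condExp_sub hint hY'int m₁).symm
    rw [Real.dist_eq, ← integral_sub integrable_condExp.integrableOn
      integrable_condExp.integrableOn]
    calc |∫ x in B, ((μ[fun ω => e n (Y' ω)|m₁]) x - (μ[Y'|m₁]) x) ∂μ|
        ≤ ∫ x in B, ‖(μ[fun ω => e n (Y' ω)|m₁]) x - (μ[Y'|m₁]) x‖ ∂μ := by
          rw [← Real.norm_eq_abs]
          exact norm_integral_le_integral_norm _
      _ = ∫ x in B, |(μ[fun x => e n (Y' x) - Y' x|m₁]) x| ∂μ :=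
          setIntegral_congr_ae hBF (hsub.mono fun x hx _ => by
            rw [Real.norm_eq_abs]; exact congrArg abs hx)
      _ ≤ ∫ x, |(μ[fun x => e n (Y' x) - Y' x|m₁]) x| ∂μ :=
          setIntegral_le_integral integrable_condExp.abs
            (Eventually.of_forall fun x => abs_nonneg _)
      _ ≤ ∫ x, |e n (Y' x) - Y' x| ∂μ := integral_abs_condExp_le _
      _ = ∫ x, ‖e n (Y' x) - Y' x‖ ∂μ := by simp [Real.norm_eq_abs]
  have hPY' : P Y' := tendsto_nhds_unique h1 h2
  have hPY : P Y := hP_ae Y' Y hYY'.symm hPY'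
  exact hPY.symm

theorem mse_eq_of_condIndep {Ω : Type*} [F : MeasurableSpace Ω] (μ : Measure Ω)
    [IsProbabilityMeasure μ] (m₁ m₂ : MeasurableSpace Ω)
    (hm₁₂ : m₁ ≤ m₂) (hm₂ : m₂ ≤ F)
    (Y : Ω → ℝ) (hY : MemLp Y 2 μ)
    (hCI : ∀ A B : Set Ω,
      MeasurableSet[MeasurableSpace.comap Y (inferInstance : MeasurableSpace ℝ)] A →
      MeasurableSet[m₂] B →
      (μ[fun ω => A.indicator (fun _ => (1 : ℝ)) ω * B.indicator (fun _ => (1 : ℝ)) ω | m₁])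
        =ᵐ[μ] fun ω =>
          (μ[A.indicator (fun _ => (1 : ℝ)) | m₁]) ω * (μ[B.indicator (fun _ => (1 : ℝ)) | m₁]) ω) :
    (∫ ω, (Y ω - (μ[Y|m₂]) ω) ^ 2 ∂μ) = ∫ ω, (Y ω - (μ[Y|m₁]) ω) ^ 2 ∂μ := by
  exact condexp_eq_condexp_of_CI (F := F) m₁ m₂ μ hm₁₂ hm₂ Y (hY.integrable one_le_two) hCI
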